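/- Let u : ℝ^d → N be Borel measurable. There exists a constant C_d > 0, depending only on d, such that for every R > 0 and every h ∈ ℝ^d with |h| ≤ R, ∫_{ℝ^d} dist_N(u(x), u(x + h)) dx ≤ (C_d / |B^d_R|) ∬_{{(x,y) ∈ ℝ^d × ℝ^d : |x − y| ≤ R}} dist_N(u(x), u(y)) dx dy. -/

import Mathlib

open MeasureTheory Metric Set ENNReal

/-- There is a constant `C_d > 0`, depending only on `d`, such that for every Borel
measurable `u : ℝ^d → N`, every `R > 0` and every `h` with `|h| ≤ R`,
`∫ dist (u x) (u (x+h)) dx ≤ (C_d / |B^d_R|) ∬_{|x-y| ≤ R} dist (u x) (u y) dx dy`. -/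
theorem stmt_8 (d : ℕ) (hd : 1 ≤ d)
    {N : Type*} [MetricSpace N] [CompleteSpace N] [TopologicalSpace.SeparableSpace N]
    [MeasurableSpace N] [BorelSpace N] :
    ∃ C : ℝ, 0 < C ∧ ∀ u : EuclideanSpace ℝ (Fin d) → N, Measurable u →
      ∀ (R : ℝ), 0 < R → ∀ h : EuclideanSpace ℝ (Fin d), ‖h‖ ≤ R →
        ∫⁻ x, edist (u x) (u (x + h))
          ≤ ENNReal.ofReal C
              * ((∫⁻ p in {p : EuclideanSpace ℝ (Fin d) × EuclideanSpace ℝ (Fin d) |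
                    dist p.1 p.2 ≤ R}, edist (u p.1) (u p.2))
                  / volume (Metric.ball (0 : EuclideanSpace ℝ (Fin d)) R)) := by
  classical
  have hdpos : 0 < d := hd
  haveI : Nontrivial (EuclideanSpace ℝ (Fin d)) := by
    have : Nonempty (Fin d) := ⟨⟨0, hdpos⟩⟩
    infer_instance
  set E := EuclideanSpace ℝ (Fin d) with hE
  refine ⟨2 ^ (d + 1), by positivity, ?_⟩
  intro u hu R hR h hh
  set f : E → ℝ≥0∞ := fun z => ∫⁻ x, edist (u x) (u (x + z)) with hfdef
  set S : Set (E × E) := {p : E × E | dist p.1 p.2 ≤ R} with hSdef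
  set D : ℝ≥0∞ := ∫⁻ p in S, edist (u p.1) (u p.2) with hDdef
  set V : ℝ≥0∞ := volume (ball (0 : E) R) with hVdef
  set c : E := (2 : ℝ)⁻¹ • h with hcdef
  have hSmeas : MeasurableSet S :=
    measurableSet_le (by fun_prop) measurable_const
  have hGmeas : Measurable fun p : E × E => edist (u p.2) (u (p.2 + p.1)) := by
    apply Measurable.edist
    · exact hu.comp measurable_snd
    · exact hu.comp (measurable_snd.add measurable_fst)
  have hfmeas : Measurable f := hGmeas.lintegral_prod_right'
  set I : ℝ≥0∞ := ∫⁻ x, edist (u x) (u (x + h)) with hIdef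
  -- Step A
  have key : ∀ z : E, I ≤ f z + f (h - z) := by
    intro z
    have h1 : I ≤ ∫⁻ x, (edist (u x) (u (x + z)) + edist (u (x + z)) (u (x + h))) :=
      lintegral_mono fun x => edist_triangle _ _ _
    have h2 : ∫⁻ x, (edist (u x) (u (x + z)) + edist (u (x + z)) (u (x + h)))
        = f z + ∫⁻ x, edist (u (x + z)) (u (x + h)) := by
      refine lintegral_add_left ?_ _
      exact (hu.edist (hu.comp (measurable_id.add_const z)))
    have h3 : (∫⁻ x, edist (u (x + z)) (u (x + h))) = f (h - z) := by
      have : ∀ x : E, edist (u (x + z)) (u (x + h))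
          = (fun y => edist (u y) (u (y + (h - z)))) (x + z) := by
        intro x
        simp only
        congr 2
        abel
      simp_rw [this]
      exact lintegral_add_right_eq_self (fun y => edist (u y) (u (y + (h - z)))) z
    calc I ≤ _ := h1
    _ = f z + f (h - z) := by rw [h2, h3]
  -- the small ball
  have hsub : ball c (R / 2) ⊆ closedBall (0 : E) R := by
    intro z hz
    simp only [mem_ball, mem_closedBall, dist_zero_right] at hz ⊢
    have hcn : ‖c‖ ≤ R / 2 := by
      rw [hcdef, norm_smul]
      simp only [norm_inv, Real.norm_ofNat]
      rw [inv_mul_eq_div]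
      linarith [hh]
    calc ‖z‖ ≤ ‖z - c‖ + ‖c‖ := by
          simpa using norm_add_le (z - c) c
    _ ≤ R / 2 + R / 2 := by
          rw [← dist_eq_norm]; exact add_le_add hz.le hcn
    _ = R := by ring
  -- Step C : integral of f over closedBall 0 R equals D
  have hC : (∫⁻ z in closedBall (0 : E) R, f z) = D := by
    have swap : (∫⁻ z in closedBall (0 : E) R, f z)
        = ∫⁻ x, ∫⁻ z in closedBall (0 : E) R, edist (u x) (u (x + z)) := by
      rw [hfdef]
      exact lintegral_lintegral_swap (hGmeas.aemeasurable)
    have inner : ∀ x : E, (∫⁻ z in closedBall (0 : E) R, edist (u x) (u (x + z)))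
        = ∫⁻ y in closedBall x R, edist (u x) (u y) := by
      intro x
      have mp : MeasurePreserving (fun z : E => x + z) volume volume :=
        measurePreserving_add_left volume x
      have hpre : (fun z : E => x + z) ⁻¹' closedBall x R = closedBall (0 : E) R := by
        ext z
        simp [dist_eq_norm]
      rw [← hpre]
      exact mp.setLIntegral_comp_preimage_emb
        (MeasurableEquiv.addLeft x).measurableEmbedding (fun y => edist (u x) (u y)) _
    have prodD : D = ∫⁻ x, ∫⁻ y in closedBall x R, edist (u x) (u y) := by
      have hFm : Measurable fun p : E × E => edist (u p.1) (u p.2) :=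
        (hu.comp measurable_fst).edist (hu.comp measurable_snd)
      rw [hDdef, ← lintegral_indicator hSmeas]
      rw [Measure.volume_eq_prod, lintegral_prod _ (hFm.indicator hSmeas).aemeasurable]
      congr 1
      ext x
      rw [← lintegral_indicator (measurableSet_closedBall)]
      congr 1
      ext y
      by_cases hxy : dist x y ≤ R
      · rw [Set.indicator_of_mem, Set.indicator_of_mem]
        · simpa [dist_comm] using hxy
        · exact hxy
      · rw [Set.indicator_of_notMem, Set.indicator_of_notMem]
        · simp only [mem_closedBall]
          rw [dist_comm]; exact hxy
        · exact hxy
    rw [swap, prodD]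
    exact lintegral_congr inner
  -- reflection
  have hrefl : (∫⁻ z in ball c (R / 2), f (h - z)) = ∫⁻ z in ball c (R / 2), f z := by
    have mp : MeasurePreserving (fun z : E => h - z) volume volume := by
      have := (measurePreserving_add_left (volume : Measure E) h).comp
        (Measure.measurePreserving_neg (volume : Measure E))
      simpa [Function.comp_def, sub_eq_add_neg] using this
    have hpre : (fun z : E => h - z) ⁻¹' ball c (R / 2) = ball c (R / 2) := by
      ext z
      simp only [mem_preimage, mem_ball, dist_eq_norm]
      change _ ↔ ‖z - c‖ < R / 2
      constructor <;> intro hz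
      · have : h - z - c = -(z - c) := by rw [hcdef]; module
        rw [show z - c = -(h - z - c) by rw [this]; abel, norm_neg] at *
        convert hz using 2
      · have hid : h - z - c = -(z - c) := by rw [hcdef]; module
        rw [hid, norm_neg]; exact hz
    calc (∫⁻ z in ball c (R / 2), f (h - z))
        = ∫⁻ z in (fun z : E => h - z) ⁻¹' ball c (R / 2), f ((fun z => h - z) z) := by
          rw [hpre]
    _ = ∫⁻ z in ball c (R / 2), f z :=
          mp.setLIntegral_comp_preimage measurableSet_ball hfmeas
  -- Step B
  set V' : ℝ≥0∞ := volume (ball c (R / 2)) with hV'def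
  have hstep : I * V' ≤ 2 * D := by
    have h1 : I * V' = ∫⁻ _ in ball c (R / 2), I := (setLIntegral_const _ _).symm
    have h2 : (∫⁻ _ in ball c (R / 2), I) ≤ ∫⁻ z in ball c (R / 2), (f z + f (h - z)) :=
      lintegral_mono fun z => key z
    have h3 : (∫⁻ z in ball c (R / 2), (f z + f (h - z)))
        = (∫⁻ z in ball c (R / 2), f z) + ∫⁻ z in ball c (R / 2), f (h - z) :=
      lintegral_add_left hfmeas _
    have h4 : (∫⁻ z in ball c (R / 2), f z) ≤ D := by
      rw [← hC]; exact lintegral_mono_set hsub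
    calc I * V' = _ := h1
    _ ≤ _ := h2
    _ = _ := h3
    _ ≤ D + D := by rw [hrefl]; exact add_le_add h4 h4
    _ = 2 * D := (two_mul D).symm
  -- volumes
  have hV'pos : V' ≠ 0 := by
    rw [hV'def]
    exact (measure_ball_pos volume c (by linarith)).ne'
  have hV'fin : V' ≠ ⊤ := measure_ball_lt_top.ne
  have hVrel : V = ENNReal.ofReal (2 ^ d) * V' := by
    rw [hVdef, hV'def, Measure.addHaar_ball_center volume c,
      Measure.addHaar_ball volume _ hR.le, Measure.addHaar_ball volume _ (by linarith : (0:ℝ) ≤ R / 2),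
      finrank_euclideanSpace_fin, ← mul_assoc, ← ENNReal.ofReal_mul (by positivity)]
    congr 2
    rw [← mul_pow]
    congr 1
    ring
  -- conclusion
  have hIle : I ≤ 2 * D / V' := by
    rw [ENNReal.le_div_iff_mul_le (Or.inl hV'pos) (Or.inl hV'fin)]
    exact hstep
  refine hIle.trans ?_
  have : ENNReal.ofReal ((2 : ℝ) ^ (d + 1)) * (D / V) = 2 * D / V' := by
    rw [hVrel]
    rw [show ((2 : ℝ) ^ (d + 1)) = 2 * 2 ^ d by ring, ENNReal.ofReal_mul (by norm_num),
      ENNReal.ofReal_ofNat]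
    rw [mul_assoc, mul_div_assoc]
    congr 1
    rw [← mul_div_assoc]
    exact ENNReal.mul_div_mul_left D V' (by positivity) ENNReal.ofReal_ne_top
  rw [this]
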